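/- Theorem 3.1 (convergence of the ideal algorithm): under the exponential family matching condition, for every x* with domination measure zero there is a sequence of sampling parameters whose mean sufficient statistics converge to Γ(x*). Concretely: suppose for each k, π_k = {A_{1,k},...,A_{I_k,k}} is a partition of A_k = {x ∈ X : D(x) ≤ γ_k} with γ_k → 0 and max_i diam(A_{i,k}) → 0, each A_{i,k} has positive measure or is empty, Γ is continuous, and θ_{i,k} satisfies E_{θ_{i,k}}[Γ] = E_{h_{i,k}}[Γ] where h_{i,k} is uniform on A_{i,k}. Then for every x* with D(x*) = 0 there exist indices i_k with x* ∈ A_{i_k,k} and lim_{k→∞} E_{θ_{i_k,k}}[Γ(x)] = Γ(x*). -/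

import Mathlib

open MeasureTheory Filter

/-- Pareto dominance: `y` dominates `x` w.r.t. objectives `f`. -/
def Dominates {α : Type*} {n : ℕ} (f : α → Fin n → ℝ) (y x : α) : Prop :=
  (∀ i, f y i ≤ f x i) ∧ ∃ j, f y j < f x j

/-- Theorem 3.1 (convergence of the ideal algorithm): suppose for each `k`,
`π_k = {A_{1,k}, …, A_{I_k,k}}` is a partition of `A_k = {x ∈ X : D(x) ≤ γ_k}`,
where `D` is the domination measure, `γ_k → 0`, and the magnitude
`max_i diam(A_{i,k}) → 0`; each cell is empty or has positive measure; `Γ` is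
continuous; and the sampling parameters `θ_{i,k}` satisfy the exponential-family
moment-matching condition `E_{θ_{i,k}}[Γ] = E_{h_{i,k}}[Γ]` with `h_{i,k}` uniform
on `A_{i,k}`. Then for every `x*` with `D(x*) = 0` there are indices `i_k` with
`x* ∈ A_{i_k,k}` and `E_{θ_{i_k,k}}[Γ] → Γ(x*)`. -/
theorem ideal_algorithm_convergence {d n m : ℕ}
    (X : Set (Fin d → ℝ)) (hXmeas : MeasurableSet X)
    (hXbdd : Bornology.IsBounded X)
    (hXpos : 0 < volume X) (hXfin : volume X < ⊤)
    (f : (Fin d → ℝ) → Fin n → ℝ)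
    (D : (Fin d → ℝ) → ℝ)
    (hD : ∀ x, D x = (volume {y ∈ X | Dominates f y x}).toReal / (volume X).toReal)
    (Γ : (Fin d → ℝ) → Fin m → ℝ) (hΓ : Continuous Γ)
    (γ : ℕ → ℝ) (hγmem : ∀ k, 0 < γ k ∧ γ k ≤ 1)
    (hγ : Tendsto γ atTop (nhds 0))
    (I : ℕ → ℕ) (A : (k : ℕ) → Fin (I k) → Set (Fin d → ℝ))
    (hAmeas : ∀ k i, MeasurableSet (A k i))
    (hcover : ∀ k, (⋃ i, A k i) = {x ∈ X | D x ≤ γ k})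
    (hdisj : ∀ k, Pairwise fun i j => Disjoint (A k i) (A k j))
    (hposOrEmpty : ∀ k i, A k i = ∅ ∨ 0 < volume (A k i))
    (hmag : Tendsto (fun k => ⨆ i, Metric.diam (A k i)) atTop (nhds 0))
    (Θty : Type*) (θ : (k : ℕ) → Fin (I k) → Θty)
    (EΓ : Θty → (Fin m → ℝ))
    -- moment matching: E_{θ_{i,k}}[Γ] = E_{h_{i,k}}[Γ], h_{i,k} uniform on A_{i,k}
    (hmatch : ∀ k i, (A k i).Nonempty →
      EΓ (θ k i) = ((volume (A k i)).toReal)⁻¹ • ∫ x in A k i, Γ x) :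
    ∀ xstar ∈ X, D xstar = 0 →
      ∃ idx : (k : ℕ) → Fin (I k),
        (∀ k, xstar ∈ A k (idx k)) ∧
        Tendsto (fun k => EΓ (θ k (idx k))) atTop (nhds (Γ xstar)) := by
  intro xstar hxX hxD
  -- choose indices
  have hmem : ∀ k, ∃ i, xstar ∈ A k i := by
    intro k
    have : xstar ∈ ⋃ i, A k i := by
      rw [hcover k]
      exact ⟨hxX, by rw [hxD]; exact (hγmem k).1.le⟩
    simpa using this
  choose idx hidx using hmem
  refine ⟨idx, hidx, ?_⟩
  -- basic facts about the chosen cells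
  have hsubX : ∀ k, A k (idx k) ⊆ X := by
    intro k y hy
    have : y ∈ ⋃ i, A k i := Set.mem_iUnion.2 ⟨idx k, hy⟩
    rw [hcover k] at this
    exact this.1
  have hvolpos : ∀ k, 0 < volume (A k (idx k)) := by
    intro k
    rcases hposOrEmpty k (idx k) with h | h
    · exact absurd (h ▸ hidx k) (Set.notMem_empty _)
    · exact h
  have hvolfin : ∀ k, volume (A k (idx k)) < ⊤ :=
    fun k => lt_of_le_of_lt (measure_mono (hsubX k)) hXfin
  have hbdd : ∀ k, Bornology.IsBounded (A k (idx k)) :=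
    fun k => hXbdd.subset (hsubX k)
  have hint : ∀ k, IntegrableOn Γ (A k (idx k)) := by
    intro k
    have hc : IsCompact (closure (A k (idx k))) := (hbdd k).isCompact_closure
    exact ((hΓ.continuousOn).integrableOn_compact hc).mono_set subset_closure
  rw [Metric.tendsto_atTop]
  intro ε hε
  obtain ⟨δ, hδ, hδimp⟩ := Metric.continuous_iff.mp hΓ xstar (ε/2) (half_pos hε)
  obtain ⟨N, hN⟩ := (Metric.tendsto_atTop.mp hmag) δ hδ
  refine ⟨N, fun k hk => ?_⟩
  have hSδ : (⨆ i, Metric.diam (A k i)) < δ := by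
    have := hN k hk
    rw [Real.dist_eq, sub_zero] at this
    exact lt_of_le_of_lt (le_abs_self _) this
  have hdiam : Metric.diam (A k (idx k)) < δ :=
    lt_of_le_of_lt (le_ciSup (f := fun i => Metric.diam (A k i)) (Set.Finite.bddAbove (Set.finite_range _)) (idx k)) hSδ
  -- pointwise bound on the cell
  have hbound : ∀ x ∈ A k (idx k), ‖Γ x - Γ xstar‖ ≤ ε/2 := by
    intro x hx
    have hdx : dist x xstar < δ :=
      lt_of_le_of_lt (Metric.dist_le_diam_of_mem (hbdd k) hx (hidx k)) hdiam
    have := hδimp x hdx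
    rw [dist_eq_norm] at this
    exact this.le
  set s := A k (idx k) with hs
  set V := (volume s).toReal with hV
  have hVpos : 0 < V := ENNReal.toReal_pos (hvolpos k).ne' (hvolfin k).ne
  have hconst : IntegrableOn (fun _ => Γ xstar) s := integrableOn_const (hvolfin k).ne enorm_ne_top
  have hEq : EΓ (θ k (idx k)) - Γ xstar = V⁻¹ • ∫ x in s, (Γ x - Γ xstar) := by
    rw [hmatch k (idx k) ⟨xstar, hidx k⟩, integral_sub (hint k) hconst, setIntegral_const, measureReal_def,
      smul_sub, smul_smul, inv_mul_cancel₀ hVpos.ne', one_smul]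
  have hnorm : ‖∫ x in s, (Γ x - Γ xstar)‖ ≤ (ε/2) * V :=
    norm_setIntegral_le_of_norm_le_const (hvolfin k) hbound
  calc dist (EΓ (θ k (idx k))) (Γ xstar) = ‖EΓ (θ k (idx k)) - Γ xstar‖ := dist_eq_norm _ _
    _ = V⁻¹ * ‖∫ x in s, (Γ x - Γ xstar)‖ := by
        rw [hEq, norm_smul, Real.norm_eq_abs, abs_of_nonneg (inv_nonneg.2 hVpos.le)]
    _ ≤ V⁻¹ * ((ε/2) * V) := by
        exact mul_le_mul_of_nonneg_left hnorm (inv_nonneg.2 hVpos.le)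
    _ = ε/2 := by field_simp
    _ < ε := half_lt_self hε
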